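/- arXiv:2510.13661 — 4 statements merged into one kernel-verified Lean document; each statement's English description precedes it below -/
import Mathlib

section
/- Let 𝒳 be a nonempty finite type, P : 𝒳 → ℝ a PMF with P x > 0 for every x, and J : 𝒳 → ℝ with ∑ x, J x = 0. Then the function ε ↦ D(P + ε·J ‖ P) − D(P ‖ P + ε·J) is O(|ε|³) as ε → 0; consequently the reversed divergence D(P ‖ P + ε·J) shares the same second-order approximation (ε²/2) · ∑ x, (J x)²/P x up to an O(|ε|³) error, i.e., the KL divergence is locally symmetric to second order. -/
open Finset Filter Topology Asymptotics

lemma logTaylor2 (u : ℝ) (hu : |u| ≤ 1/2) :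
    |Real.log (1 + u) - (u - u ^ 2 / 2)| ≤ 2 * |u| ^ 3 := by
  have h1 : |(-u)| < 1 := by rw [abs_neg]; linarith
  have h := Real.abs_log_sub_add_sum_range_le h1 2
  simp only [Finset.sum_range_succ, Finset.sum_range_zero] at h
  have habs : 0 ≤ |u| := abs_nonneg u
  rw [show (1 : ℝ) - -u = 1 + u from by ring, abs_neg] at h
  push_cast at h
  have heq : 0 + (-u) ^ (0+1) / ((0:ℝ)+1) + (-u) ^ (1+1) / ((1:ℝ)+1) + Real.log (1 + u)
      = Real.log (1 + u) - (u - u ^ 2 / 2) := by ring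
  rw [heq] at h
  have h2 : |u| ^ (2+1) / (1 - |u|) ≤ 2 * |u| ^ 3 := by
    rw [div_le_iff₀ (by linarith), show |u| ^ (2+1) = |u| ^ 3 from by norm_num]
    nlinarith [pow_nonneg habs 3]
  linarith

lemma rev_term (c t : ℝ) (hc : 0 < c) (ht : |t| ≤ c / 2) :
    |c * Real.log (c / (c + t)) + t - t ^ 2 / (2 * c)| ≤ 2 * |t| ^ 3 / c ^ 2 := by
  have hct : 0 < c + t := by
    have := abs_le.1 ht
    linarith [this.1]
  set u := t / c with hu
  have hut : t = c * u := by rw [hu, mul_div_assoc', mul_div_cancel_left₀ t hc.ne']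
  have huabs : |u| ≤ 1/2 := by
    rw [hu, abs_div, abs_of_pos hc, div_le_iff₀ hc]
    linarith
  have hlog : Real.log (c / (c + t)) = -Real.log (1 + u) := by
    rw [show (1 : ℝ) + u = (c + t) / c by field_simp [hu]; linear_combination -hut,
      Real.log_div hc.ne' hct.ne', Real.log_div hct.ne' hc.ne']
    ring
  have hR := logTaylor2 u huabs
  have key : c * Real.log (c / (c + t)) + t - t ^ 2 / (2 * c)
      = -(c * (Real.log (1 + u) - (u - u ^ 2 / 2))) := by
    rw [hlog, hut]; field_simp; ring
  rw [key, abs_neg, abs_mul, abs_of_pos hc]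
  have : |t| ^ 3 = c ^ 3 * |u| ^ 3 := by
    rw [hut, abs_mul, abs_of_pos hc, mul_pow]
  rw [this]
  calc c * |Real.log (1 + u) - (u - u ^ 2 / 2)| ≤ c * (2 * |u| ^ 3) := by
        exact mul_le_mul_of_nonneg_left hR hc.le
    _ = 2 * (c ^ 3 * |u| ^ 3) / c ^ 2 := by field_simp

lemma fwd_term (c t : ℝ) (hc : 0 < c) (ht : |t| ≤ c / 2) :
    |(c + t) * Real.log ((c + t) / c) - t - t ^ 2 / (2 * c)| ≤ 4 * |t| ^ 3 / c ^ 2 := by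
  have hct : 0 < c + t := by
    have := abs_le.1 ht
    linarith [this.1]
  set u := t / c with hu
  have hut : t = c * u := by rw [hu, mul_div_assoc', mul_div_cancel_left₀ t hc.ne']
  have huabs : |u| ≤ 1/2 := by
    rw [hu, abs_div, abs_of_pos hc, div_le_iff₀ hc]
    linarith
  have hlog : Real.log ((c + t) / c) = Real.log (1 + u) := by
    congr 1; field_simp [hu]; linear_combination hut
  have hR := logTaylor2 u huabs
  have key : (c + t) * Real.log ((c + t) / c) - t - t ^ 2 / (2 * c)
      = c * (-u ^ 3 / 2) + (c * (1 + u)) * (Real.log (1 + u) - (u - u ^ 2 / 2)) := by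
    rw [hlog, hut]; field_simp; ring
  rw [key]
  have hub := abs_le.1 huabs
  have h1 : |c * (-u ^ 3 / 2)| ≤ c * |u| ^ 3 / 2 := by
    rw [abs_mul, abs_of_pos hc, abs_div, abs_neg, abs_pow]
    simp [abs_of_pos]
    ring_nf
    simp
  have h2 : |(c * (1 + u)) * (Real.log (1 + u) - (u - u ^ 2 / 2))| ≤ (c * (3/2)) * (2 * |u| ^ 3) := by
    rw [abs_mul]
    apply mul_le_mul _ hR (abs_nonneg _) (by positivity)
    rw [abs_mul, abs_of_pos hc]
    apply mul_le_mul_of_nonneg_left _ hc.le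
    rw [abs_le]; constructor <;> linarith
  have : |t| ^ 3 = c ^ 3 * |u| ^ 3 := by
    rw [hut, abs_mul, abs_of_pos hc, mul_pow]
  calc |c * (-u ^ 3 / 2) + (c * (1 + u)) * (Real.log (1 + u) - (u - u ^ 2 / 2))|
      ≤ c * |u| ^ 3 / 2 + (c * (3/2)) * (2 * |u| ^ 3) := by
        refine (abs_add_le _ _).trans (add_le_add h1 h2)
    _ ≤ 4 * |t| ^ 3 / c ^ 2 := by
        rw [this]
        have h4 : 4 * (c ^ 3 * |u| ^ 3) / c ^ 2 = 4 * c * |u| ^ 3 := by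
          field_simp
        rw [h4]
        nlinarith [pow_nonneg (abs_nonneg u) 3]

/-- For a strictly positive PMF `P` and a zero-sum perturbation `J`,
the difference between the forward KL divergence `D(P + ε·J ‖ P)` and the reversed
divergence `D(P ‖ P + ε·J)` is `O(|ε|³)` as `ε → 0`; consequently the reversed
divergence shares the same second-order approximation `(ε²/2) ∑ x (J x)²/(P x)`
up to an `O(|ε|³)` error, i.e. KL divergence is locally symmetric to second order. -/
theorem kl_local_symmetry {𝒳 : Type*} [Fintype 𝒳] [Nonempty 𝒳]
    (P J : 𝒳 → ℝ)
    (hP0 : ∀ x, 0 < P x) (hP1 : ∑ x, P x = 1)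
    (hJ : ∑ x, J x = 0) :
    ((fun ε : ℝ =>
        (∑ x, if P x + ε * J x = 0 then 0
          else (P x + ε * J x) * Real.log ((P x + ε * J x) / P x))
        - ∑ x, P x * Real.log (P x / (P x + ε * J x)))
      =O[𝓝 0] (fun ε : ℝ => |ε| ^ 3)) ∧
    ((fun ε : ℝ =>
        (∑ x, P x * Real.log (P x / (P x + ε * J x)))
        - ε ^ 2 / 2 * ∑ x, (J x) ^ 2 / P x)
      =O[𝓝 0] (fun ε : ℝ => |ε| ^ 3)) := by
  set S := ∑ x, (J x) ^ 2 / P x with hS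
  have hev : ∀ᶠ ε : ℝ in 𝓝 0, ∀ x, |ε * J x| ≤ P x / 2 := by
    rw [Filter.eventually_all]
    intro x
    have ht : Tendsto (fun ε : ℝ => |ε * J x|) (𝓝 0) (𝓝 0) := by
      have : Tendsto (fun ε : ℝ => ε * J x) (𝓝 0) (𝓝 (0 * J x)) :=
        (continuous_id.mul continuous_const).tendsto 0
      rw [zero_mul] at this
      simpa using this.abs
    exact (ht.eventually_lt_const (by linarith [hP0 x])).mono fun ε h => h.le
  have habs3 : ∀ (ε : ℝ) (x : 𝒳), |ε * J x| ^ 3 = |ε| ^ 3 * |J x| ^ 3 := by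
    intro ε x; rw [abs_mul, mul_pow]
  -- reversed divergence bound
  have hG : (fun ε : ℝ =>
        (∑ x, P x * Real.log (P x / (P x + ε * J x))) - ε ^ 2 / 2 * S)
      =O[𝓝 0] (fun ε : ℝ => |ε| ^ 3) := by
    apply Asymptotics.IsBigO.of_bound (∑ x, 2 * |J x| ^ 3 / (P x) ^ 2)
    filter_upwards [hev] with ε hε
    have e1 : ∑ x, ε * J x = 0 := by rw [← Finset.mul_sum, hJ, mul_zero]
    have e2 : ∑ x, (ε * J x) ^ 2 / (2 * P x) = ε ^ 2 / 2 * S := by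
      rw [hS, Finset.mul_sum]
      apply Finset.sum_congr rfl
      intro x _
      have := (hP0 x).ne'
      field_simp
    have key : (∑ x, P x * Real.log (P x / (P x + ε * J x))) - ε ^ 2 / 2 * S
        = ∑ x, (P x * Real.log (P x / (P x + ε * J x)) + ε * J x
            - (ε * J x) ^ 2 / (2 * P x)) := by
      rw [Finset.sum_sub_distrib, Finset.sum_add_distrib, e1, e2]
      ring
    rw [Real.norm_eq_abs, Real.norm_eq_abs, abs_of_nonneg (by positivity : (0:ℝ) ≤ |ε| ^ 3),
      key]
    calc |∑ x, (P x * Real.log (P x / (P x + ε * J x)) + ε * J x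
            - (ε * J x) ^ 2 / (2 * P x))|
        ≤ ∑ x, |P x * Real.log (P x / (P x + ε * J x)) + ε * J x
            - (ε * J x) ^ 2 / (2 * P x)| := Finset.abs_sum_le_sum_abs _ _
      _ ≤ ∑ x, 2 * |J x| ^ 3 / (P x) ^ 2 * |ε| ^ 3 := by
          apply Finset.sum_le_sum
          intro x _
          have h := rev_term (P x) (ε * J x) (hP0 x) (hε x)
          rw [habs3 ε x] at h
          calc _ ≤ 2 * (|ε| ^ 3 * |J x| ^ 3) / (P x) ^ 2 := h
            _ = 2 * |J x| ^ 3 / (P x) ^ 2 * |ε| ^ 3 := by ring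
      _ = (∑ x, 2 * |J x| ^ 3 / (P x) ^ 2) * |ε| ^ 3 := by rw [← Finset.sum_mul]
  -- forward divergence bound
  have hF : (fun ε : ℝ =>
        (∑ x, if P x + ε * J x = 0 then 0
          else (P x + ε * J x) * Real.log ((P x + ε * J x) / P x)) - ε ^ 2 / 2 * S)
      =O[𝓝 0] (fun ε : ℝ => |ε| ^ 3) := by
    apply Asymptotics.IsBigO.of_bound (∑ x, 4 * |J x| ^ 3 / (P x) ^ 2)
    filter_upwards [hev] with ε hε
    have hpos : ∀ x, 0 < P x + ε * J x := by
      intro x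
      have := (abs_le.1 (hε x)).1
      linarith [hP0 x]
    have hif : (∑ x, if P x + ε * J x = 0 then 0
          else (P x + ε * J x) * Real.log ((P x + ε * J x) / P x))
        = ∑ x, (P x + ε * J x) * Real.log ((P x + ε * J x) / P x) := by
      apply Finset.sum_congr rfl
      intro x _
      rw [if_neg (hpos x).ne']
    have e1 : ∑ x, ε * J x = 0 := by rw [← Finset.mul_sum, hJ, mul_zero]
    have e2 : ∑ x, (ε * J x) ^ 2 / (2 * P x) = ε ^ 2 / 2 * S := by
      rw [hS, Finset.mul_sum]
      apply Finset.sum_congr rfl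
      intro x _
      have := (hP0 x).ne'
      field_simp
    have key : (∑ x, (P x + ε * J x) * Real.log ((P x + ε * J x) / P x)) - ε ^ 2 / 2 * S
        = ∑ x, ((P x + ε * J x) * Real.log ((P x + ε * J x) / P x) - ε * J x
            - (ε * J x) ^ 2 / (2 * P x)) := by
      rw [Finset.sum_sub_distrib, Finset.sum_sub_distrib, e1, e2]
      ring
    rw [Real.norm_eq_abs, Real.norm_eq_abs, abs_of_nonneg (by positivity : (0:ℝ) ≤ |ε| ^ 3),
      hif, key]
    calc |∑ x, ((P x + ε * J x) * Real.log ((P x + ε * J x) / P x) - ε * J x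
            - (ε * J x) ^ 2 / (2 * P x))|
        ≤ ∑ x, |(P x + ε * J x) * Real.log ((P x + ε * J x) / P x) - ε * J x
            - (ε * J x) ^ 2 / (2 * P x)| := Finset.abs_sum_le_sum_abs _ _
      _ ≤ ∑ x, 4 * |J x| ^ 3 / (P x) ^ 2 * |ε| ^ 3 := by
          apply Finset.sum_le_sum
          intro x _
          have h := fwd_term (P x) (ε * J x) (hP0 x) (hε x)
          rw [habs3 ε x] at h
          calc _ ≤ 4 * (|ε| ^ 3 * |J x| ^ 3) / (P x) ^ 2 := h
            _ = 4 * |J x| ^ 3 / (P x) ^ 2 * |ε| ^ 3 := by ring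
      _ = (∑ x, 4 * |J x| ^ 3 / (P x) ^ 2) * |ε| ^ 3 := by rw [← Finset.sum_mul]
  refine ⟨?_, hG⟩
  have := hF.sub hG
  apply this.congr_left
  intro ε
  ring
end

section
/- Let 𝒰 and 𝒳 be nonempty finite types, P_U a PMF on 𝒰, P_X a PMF on 𝒳 with P_X x > 0 for every x, and for each u a perturbation J(·|u) : 𝒳 → ℝ satisfying ∑ x, J(x|u) = 0 for every u and the consistency condition ∑ u, P_U u * J(x|u) = 0 for every x. For ε near 0 define the joint PMF p_ε(u,x) = P_U u * (P_X x + ε·J(x|u)). Then the function ε ↦ I_ε(U;X) − (ε²/2) · ∑ u, P_U u * ∑ x, (J(x|u))² / P_X x is O(|ε|³) as ε → 0, where I_ε(U;X) denotes the mutual information of the joint PMF p_ε. -/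
open Finset Filter Topology Asymptotics

/-- Mutual information of a joint PMF `p` on a finite product, with the convention
that a summand is `0` when `p (u, a) = 0`.  The marginals are computed from `p`. -/
noncomputable def mutInfo {α β : Type*} [Fintype α] [Fintype β] (p : α → β → ℝ) : ℝ :=
  ∑ a, ∑ b, if p a b = 0 then 0
    else p a b * Real.log (p a b / ((∑ b', p a b') * (∑ a', p a' b)))

lemma phi_bound {t : ℝ} (ht : |t| ≤ 1/2) :
    |(1+t) * Real.log (1+t) - t - t^2/2| ≤ 4 * |t|^3 := by
  have habs := abs_le.1 ht
  have h1 : |(-t : ℝ)| < 1 := by rw [abs_neg]; linarith [abs_le.1 ht, abs_nonneg t]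
  have h2 := Real.abs_log_sub_add_sum_range_le h1 2
  have hsum : (∑ i ∈ Finset.range 2, (-t) ^ (i+1) / ((i:ℝ)+1)) = -t + t^2/2 := by
    simp [Finset.sum_range_succ]
    ring
  rw [hsum] at h2
  have h3 : (1 : ℝ) - -t = 1 + t := by ring
  rw [h3, abs_neg] at h2
  have hR : |-t + t^2/2 + Real.log (1+t)| ≤ 2 * |t|^3 := by
    refine h2.trans ?_
    rw [div_le_iff₀ (by linarith : (0:ℝ) < 1 - |t|)]
    have e3 : |t| ^ (2+1) = |t|^3 := by norm_num
    rw [e3]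
    nlinarith [pow_nonneg (abs_nonneg t) 3, abs_nonneg t,
      mul_le_mul_of_nonneg_left habs.2 (pow_nonneg (abs_nonneg t) 3)]
  set L := Real.log (1+t) with hL
  have key : (1+t)*L - t - t^2/2 = (1+t)*(-t + t^2/2 + L) - t^3/2 := by ring
  rw [key]
  have t1 : |(1+t)*(-t + t^2/2 + L)| ≤ (3/2) * (2*|t|^3) := by
    rw [abs_mul]
    have h1t : |1+t| ≤ 3/2 := by rw [abs_le]; constructor <;> linarith
    exact mul_le_mul h1t hR (abs_nonneg _) (by norm_num)
  have t2 : |t^3/2| ≤ |t|^3/2 := by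
    rw [abs_div, abs_pow]; norm_num
  calc |(1+t)*(-t + t^2/2 + L) - t^3/2| ≤ |(1+t)*(-t + t^2/2 + L)| + |t^3/2| := abs_sub _ _
    _ ≤ (3/2)*(2*|t|^3) + |t|^3/2 := add_le_add t1 t2
    _ ≤ 4 * |t|^3 := by nlinarith [pow_nonneg (abs_nonneg t) 3]

/-- Under zero-sum perturbations `J(·|u)` of a strictly positive
reference PMF `P_X` satisfying the consistency condition, the mutual information of
the joint PMF `p_ε(u,x) = P_U u * (P_X x + ε·J(x|u))` agrees with the quadratic form
`(ε²/2) ∑_u P_U u ∑_x (J(x|u))²/(P_X x)` up to an `O(|ε|³)` error as `ε → 0`. -/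
theorem mutual_information_local_quadratic_approx
    {𝒰 𝒳 : Type*} [Fintype 𝒰] [Nonempty 𝒰] [Fintype 𝒳] [Nonempty 𝒳]
    (PU : 𝒰 → ℝ) (hPU0 : ∀ u, 0 ≤ PU u) (hPU1 : ∑ u, PU u = 1)
    (PX : 𝒳 → ℝ) (hPX0 : ∀ x, 0 < PX x) (hPX1 : ∑ x, PX x = 1)
    (J : 𝒳 → 𝒰 → ℝ)
    (hJsum : ∀ u, ∑ x, J x u = 0)
    (hJcons : ∀ x, ∑ u, PU u * J x u = 0) :
    (fun ε : ℝ =>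
        mutInfo (fun u x => PU u * (PX x + ε * J x u))
          - ε ^ 2 / 2 * ∑ u, PU u * ∑ x, (J x u) ^ 2 / PX x)
      =O[𝓝 0] (fun ε : ℝ => |ε| ^ 3) := by
  classical
  set M : ℝ := 1 + ∑ x, ∑ u, |J x u| with hMdef
  have hMsum : 0 ≤ ∑ x, ∑ u, |J x u| :=
    Finset.sum_nonneg fun x _ => Finset.sum_nonneg fun u _ => abs_nonneg _
  have hM1 : (1:ℝ) ≤ M := by rw [hMdef]; linarith
  have hMpos : 0 < M := lt_of_lt_of_le one_pos hM1
  have hJle : ∀ x u, |J x u| ≤ M := by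
    intro x u
    have h1 : |J x u| ≤ ∑ u, |J x u| :=
      Finset.single_le_sum (f := fun u => |J x u|) (fun _ _ => abs_nonneg _) (Finset.mem_univ u)
    have h2 : (∑ u, |J x u|) ≤ ∑ x, ∑ u, |J x u| :=
      Finset.single_le_sum (f := fun x => ∑ u, |J x u|)
        (fun _ _ => Finset.sum_nonneg fun _ _ => abs_nonneg _) (Finset.mem_univ x)
    rw [hMdef]; linarith
  obtain ⟨x₀, -, hx₀⟩ := Finset.exists_min_image (Finset.univ : Finset 𝒳) PX
    ⟨Classical.arbitrary 𝒳, Finset.mem_univ _⟩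
  set m := PX x₀ with hmdef
  have hmpos : 0 < m := hPX0 x₀
  have hmle : ∀ x, m ≤ PX x := fun x => hx₀ x (Finset.mem_univ x)
  set δ := m / (2 * M) with hδdef
  have hδpos : 0 < δ := div_pos hmpos (by linarith)
  rw [Asymptotics.isBigO_iff]
  refine ⟨(Fintype.card 𝒳 : ℝ) * (4 * M^3 / m^2), ?_⟩
  filter_upwards [Metric.ball_mem_nhds (0:ℝ) hδpos] with ε hε
  have hεδ : |ε| < δ := by simpa [Real.dist_eq] using hε
  have hpert : ∀ x u, |ε * J x u| ≤ m / 2 := by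
    intro x u
    rw [abs_mul]
    have h1 : |ε| * |J x u| ≤ δ * M :=
      mul_le_mul hεδ.le (hJle x u) (abs_nonneg _) hδpos.le
    have h2 : δ * M = m / 2 := by
      rw [hδdef]; field_simp
    exact le_of_le_of_eq h1 h2
  have hpos : ∀ x u, 0 < PX x + ε * J x u := by
    intro x u
    have h := abs_le.1 (hpert x u)
    have := hmle x
    linarith [h.1]
  have hrow : ∀ u, ∑ x, PU u * (PX x + ε * J x u) = PU u := by
    intro u
    rw [← Finset.mul_sum, Finset.sum_add_distrib, hPX1, ← Finset.mul_sum, hJsum]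
    ring
  have hcol : ∀ x, ∑ u, PU u * (PX x + ε * J x u) = PX x := by
    intro x
    have h : ∀ u, PU u * (PX x + ε * J x u) = PU u * PX x + ε * (PU u * J x u) :=
      fun u => by ring
    rw [Finset.sum_congr rfl fun u _ => h u, Finset.sum_add_distrib,
      ← Finset.sum_mul, ← Finset.mul_sum, hJcons, hPU1]
    ring
  have hmut : mutInfo (fun u x => PU u * (PX x + ε * J x u))
      = ∑ u, PU u * ∑ x, (PX x + ε * J x u) * Real.log ((PX x + ε * J x u) / PX x) := by
    simp only [mutInfo]
    refine Finset.sum_congr rfl fun u _ => ?_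
    rw [Finset.mul_sum]
    refine Finset.sum_congr rfl fun x _ => ?_
    rw [hrow u, hcol x]
    by_cases hu : PU u = 0
    · simp [hu]
    · have hne : PU u * (PX x + ε * J x u) ≠ 0 := mul_ne_zero hu (hpos x u).ne'
      rw [if_neg hne, mul_div_mul_left _ _ hu]
      ring
  set r : 𝒳 → 𝒰 → ℝ := fun x u =>
    (PX x + ε * J x u) * Real.log ((PX x + ε * J x u) / PX x)
      - ε * J x u - ε^2 * (J x u)^2 / (2 * PX x) with hrdef
  have hsplit : ∀ u, ∑ x, (PX x + ε * J x u) * Real.log ((PX x + ε * J x u) / PX x)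
      = ∑ x, r x u + ε^2/2 * ∑ x, (J x u)^2 / PX x := by
    intro u
    have h : ∀ x, (PX x + ε * J x u) * Real.log ((PX x + ε * J x u) / PX x)
        = r x u + ε * J x u + ε^2/2 * ((J x u)^2 / PX x) := by
      intro x
      rw [hrdef]
      ring
    rw [Finset.sum_congr rfl fun x _ => h x, Finset.sum_add_distrib,
      Finset.sum_add_distrib, ← Finset.mul_sum, hJsum, ← Finset.mul_sum]
    ring
  have hF : mutInfo (fun u x => PU u * (PX x + ε * J x u))
      - ε ^ 2 / 2 * ∑ u, PU u * ∑ x, (J x u) ^ 2 / PX x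
      = ∑ u, PU u * ∑ x, r x u := by
    rw [hmut, Finset.mul_sum, ← Finset.sum_sub_distrib]
    exact Finset.sum_congr rfl fun u _ => by rw [hsplit u]; ring
  have hrbound : ∀ x u, |r x u| ≤ 4 * M^3 / m^2 * |ε|^3 := by
    intro x u
    have hPXne : PX x ≠ 0 := (hPX0 x).ne'
    set t := ε * J x u / PX x with htd
    have ht : |t| ≤ 1/2 := by
      rw [htd, abs_div, abs_of_pos (hPX0 x), div_le_iff₀ (hPX0 x)]
      have := hpert x u
      have := hmle x
      linarith
    have h2 : (PX x + ε * J x u) / PX x = 1 + t := by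
      rw [htd, add_div, div_self hPXne]
    have hrepr : r x u = PX x * ((1+t) * Real.log (1+t) - t - t^2/2) := by
      simp only [hrdef]
      rw [h2, htd]
      field_simp
    have hb := phi_bound ht
    rw [hrepr, abs_mul, abs_of_pos (hPX0 x)]
    have habs : |t| = |ε| * |J x u| / PX x := by
      rw [htd, abs_div, abs_mul, abs_of_pos (hPX0 x)]
    calc PX x * |(1+t) * Real.log (1+t) - t - t^2/2|
        ≤ PX x * (4 * (|ε| * |J x u| / PX x)^3) := by
          rw [← habs]; exact mul_le_mul_of_nonneg_left hb (hPX0 x).le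
      _ = 4 * (|ε|^3 * |J x u|^3) / PX x^2 := by field_simp
      _ ≤ 4 * (|ε|^3 * M^3) / m^2 := by
          apply div_le_div₀ (by positivity) ?_ (by positivity) ?_
          · have : |J x u|^3 ≤ M^3 := pow_le_pow_left₀ (abs_nonneg _) (hJle x u) 3
            nlinarith [pow_nonneg (abs_nonneg ε) 3]
          · exact pow_le_pow_left₀ hmpos.le (hmle x) 2
      _ = 4 * M^3 / m^2 * |ε|^3 := by ring
  rw [hF]
  have key : |∑ u, PU u * ∑ x, r x u| ≤ (Fintype.card 𝒳 : ℝ) * (4 * M^3 / m^2) * |ε|^3 := by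
    calc |∑ u, PU u * ∑ x, r x u| ≤ ∑ u, |PU u * ∑ x, r x u| :=
          Finset.abs_sum_le_sum_abs _ _
      _ ≤ ∑ u, PU u * ((Fintype.card 𝒳 : ℝ) * (4 * M^3 / m^2 * |ε|^3)) := by
          refine Finset.sum_le_sum fun u _ => ?_
          rw [abs_mul, abs_of_nonneg (hPU0 u)]
          refine mul_le_mul_of_nonneg_left ?_ (hPU0 u)
          calc |∑ x, r x u| ≤ ∑ x, |r x u| := Finset.abs_sum_le_sum_abs _ _
            _ ≤ ∑ _x : 𝒳, (4 * M^3 / m^2 * |ε|^3) :=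
                Finset.sum_le_sum fun x _ => hrbound x u
            _ = (Fintype.card 𝒳 : ℝ) * (4 * M^3 / m^2 * |ε|^3) := by
                rw [Finset.sum_const, Finset.card_univ, nsmul_eq_mul]
      _ = (Fintype.card 𝒳 : ℝ) * (4 * M^3 / m^2) * |ε|^3 := by
          rw [← Finset.sum_mul, hPU1]; ring
  have hnorm : ‖|ε| ^ 3‖ = |ε|^3 := by
    rw [Real.norm_eq_abs, abs_of_nonneg (pow_nonneg (abs_nonneg ε) 3)]
  rw [Real.norm_eq_abs, hnorm]
  exact key
end

section
/- Let 𝒰, 𝒳, 𝒴 be nonempty finite types, P_U a PMF on 𝒰, P_X a PMF on 𝒳 with P_X x > 0 for every x, and W(y|x) a channel (for each x, W(·|x) is a PMF on 𝒴). Assume the output marginal P_Y y = ∑ x, P_X x * W(y|x) satisfies P_Y y > 0 for every y. Let J(·|u) : 𝒳 → ℝ satisfy ∑ x, J(x|u) = 0 for every u and ∑ u, P_U u * J(x|u) = 0 for every x, and define the induced output perturbation J_Y(y|u) = ∑ x, J(x|u) * W(y|x). For ε near 0 define the joint PMF q_ε(u,y) = P_U u * ∑ x, (P_X x + ε·J(x|u))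 * W(y|x). Then the function ε ↦ I_ε(U;Y) − (ε²/2) · ∑ u, P_U u * ∑ y, (J_Y(y|u))² / P_Y y is O(|ε|³) as ε → 0, where I_ε(U;Y) denotes the mutual information of the joint PMF q_ε. -/
open Finset Filter Topology Asymptotics

/-- Quadratic Taylor estimate for `(1+s) log(1+s)`. -/
lemma abs_one_add_mul_log_sub_le (s : ℝ) (hs : |s| ≤ 1/2) :
    |(1+s) * Real.log (1+s) - (s + s^2/2)| ≤ 4 * |s|^3 := by
  have hs1 : |(-s : ℝ)| < 1 := by rw [abs_neg]; linarith
  have key := Real.abs_log_sub_add_sum_range_le hs1 2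
  rw [show (1:ℝ) - -s = 1 + s by ring] at key
  simp only [Finset.sum_range_succ, Finset.sum_range_zero] at key
  norm_num at key
  have hR : |Real.log (1+s) - (s - s^2/2)| ≤ |s|^3 / (1 - |s|) := by
    convert key using 2
    ring
  set R : ℝ := Real.log (1+s) - (s - s^2/2) with hRdef
  have h3 : |s|^3 / (1 - |s|) ≤ 2 * |s|^3 := by
    rw [div_le_iff₀ (by linarith)]
    nlinarith [abs_nonneg s, pow_nonneg (abs_nonneg s) 3]
  have hR2 : |R| ≤ 2 * |s|^3 := le_trans hR h3
  have hL : Real.log (1+s) = R + (s - s^2/2) := by rw [hRdef]; ring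
  have h1s : |1 + s| ≤ 3/2 := by
    rw [abs_le]; constructor <;> [linarith [neg_abs_le s]; linarith [le_abs_self s]]
  calc |(1+s) * Real.log (1+s) - (s + s^2/2)| = |(1+s)*R - s^3/2| := by
        rw [hL]; ring_nf
    _ ≤ |(1+s)*R| + |s^3/2| := abs_sub _ _
    _ = |1 + s| * |R| + |s| ^ 3 / 2 := by rw [abs_mul, abs_div, abs_pow]; norm_num
    _ ≤ 4 * |s|^3 := by nlinarith [abs_nonneg R, abs_nonneg (1+s), pow_nonneg (abs_nonneg s) 3]

/-- Passing zero-sum, consistent perturbations `J(·|u)` of a strictly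
positive reference PMF `P_X` through a channel `W`, the mutual information of the joint
PMF `q_ε(u,y) = P_U u * ∑ x (P_X x + ε·J(x|u)) W(y|x)` agrees with the quadratic form
`(ε²/2) ∑_u P_U u ∑_y (J_Y(y|u))²/(P_Y y)`, where `J_Y(y|u) = ∑ x J(x|u) W(y|x)` and
`P_Y y = ∑ x P_X x W(y|x)`, up to an `O(|ε|³)` error as `ε → 0`. -/
theorem output_mutual_information_local_quadratic_approx
    {𝒰 𝒳 𝒴 : Type*} [Fintype 𝒰] [Nonempty 𝒰] [Fintype 𝒳] [Nonempty 𝒳]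
    [Fintype 𝒴] [Nonempty 𝒴]
    (PU : 𝒰 → ℝ) (hPU0 : ∀ u, 0 ≤ PU u) (hPU1 : ∑ u, PU u = 1)
    (PX : 𝒳 → ℝ) (hPX0 : ∀ x, 0 < PX x) (hPX1 : ∑ x, PX x = 1)
    (W : 𝒴 → 𝒳 → ℝ)
    (hW0 : ∀ x y, 0 ≤ W y x) (hW1 : ∀ x, ∑ y, W y x = 1)
    (hPY : ∀ y, 0 < ∑ x, PX x * W y x)
    (J : 𝒳 → 𝒰 → ℝ)
    (hJsum : ∀ u, ∑ x, J x u = 0)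
    (hJcons : ∀ x, ∑ u, PU u * J x u = 0) :
    (fun ε : ℝ =>
        mutInfo (fun u y => PU u * ∑ x, (PX x + ε * J x u) * W y x)
          - ε ^ 2 / 2 *
              ∑ u, PU u * ∑ y, (∑ x, J x u * W y x) ^ 2 / (∑ x, PX x * W y x))
      =O[𝓝 0] (fun ε : ℝ => |ε| ^ 3) := by
  set PY : 𝒴 → ℝ := fun y => ∑ x, PX x * W y x with hPYdef
  set JY : 𝒰 → 𝒴 → ℝ := fun u y => ∑ x, J x u * W y x with hJYdef
  have hPYpos : ∀ y, 0 < PY y := hPY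
  have hPY1 : ∑ y, PY y = 1 := by
    rw [hPYdef, Finset.sum_comm]
    simp only [← Finset.mul_sum, hW1, mul_one]
    exact hPX1
  have hJYy : ∀ u, ∑ y, JY u y = 0 := by
    intro u
    rw [hJYdef]
    rw [Finset.sum_comm]
    simp only [← Finset.mul_sum, hW1, mul_one]
    exact hJsum u
  have hJYcons : ∀ y, ∑ u, PU u * JY u y = 0 := by
    intro y
    simp only [hJYdef, Finset.mul_sum]
    rw [Finset.sum_comm]
    simp only [← mul_assoc, ← Finset.sum_mul, hJcons, zero_mul, Finset.sum_const_zero]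
  have hq : ∀ (ε : ℝ) u y, ∑ x, (PX x + ε * J x u) * W y x = PY y + ε * JY u y := by
    intro ε u y
    simp only [add_mul, Finset.sum_add_distrib, hPYdef, hJYdef, Finset.mul_sum, mul_assoc]
  -- the eventual smallness condition
  have hev : ∀ᶠ ε : ℝ in 𝓝 0, ∀ u y, |ε * JY u y| ≤ PY y / 2 := by
    rw [Filter.eventually_all]
    intro u
    rw [Filter.eventually_all]
    intro y
    have hcont : Continuous fun ε : ℝ => |ε * JY u y| :=
      (continuous_id.mul continuous_const).abs
    have h0 : |(0:ℝ) * JY u y| < PY y / 2 := by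
      simpa using half_pos (hPYpos y)
    exact ((hcont.tendsto 0).eventually_lt_const h0).mono fun ε h => le_of_lt h
  rw [Asymptotics.isBigO_iff]
  refine ⟨∑ u, ∑ y, PU u * PY y * (4 * (|JY u y| / PY y)^3), ?_⟩
  filter_upwards [hev] with ε hε
  -- rewrite the mutual information
  have hmut : mutInfo (fun u y => PU u * ∑ x, (PX x + ε * J x u) * W y x)
      = ∑ u, ∑ y, PU u * PY y *
        ((1 + ε * JY u y / PY y) * Real.log (1 + ε * JY u y / PY y)) := by
    unfold mutInfo
    refine Finset.sum_congr rfl fun u _ => Finset.sum_congr rfl fun y _ => ?_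
    simp only [hq ε]
    have m1 : ∑ y', PU u * (PY y' + ε * JY u y') = PU u := by
      rw [← Finset.mul_sum, Finset.sum_add_distrib, hPY1, ← Finset.mul_sum, hJYy u,
        mul_zero, add_zero, mul_one]
    have m2 : ∑ u', PU u' * (PY y + ε * JY u' y) = PY y := by
      simp only [mul_add, Finset.sum_add_distrib, ← Finset.sum_mul, hPU1, one_mul]
      have : ∀ u', PU u' * (ε * JY u' y) = ε * (PU u' * JY u' y) := fun u' => by ring
      simp only [this, ← Finset.mul_sum, hJYcons y, mul_zero, add_zero]
    rw [m1, m2]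
    by_cases hPUu : PU u = 0
    · simp [hPUu]
    · have hPUpos : 0 < PU u := lt_of_le_of_ne (hPU0 u) (Ne.symm hPUu)
      have habs := hε u y
      have hpos : 0 < PY y + ε * JY u y := by
        have h1 := neg_abs_le (ε * JY u y)
        have h2 := hPYpos y
        linarith
      rw [if_neg (mul_pos hPUpos hpos).ne']
      have hPYne : PY y ≠ 0 := (hPYpos y).ne'
      have harg : PU u * (PY y + ε * JY u y) / (PU u * PY y)
          = 1 + ε * JY u y / PY y := by
        field_simp
      have hfac : PU u * (PY y + ε * JY u y)
          = PU u * PY y * (1 + ε * JY u y / PY y) := by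
        field_simp
      rw [harg, hfac]
      ring
  -- rewrite the quadratic term
  have hquad : ε ^ 2 / 2 * ∑ u, PU u * ∑ y, JY u y ^ 2 / PY y
      = ∑ u, ∑ y, PU u * PY y *
          (ε * JY u y / PY y + (ε * JY u y / PY y)^2 / 2) := by
    rw [Finset.mul_sum]
    refine Finset.sum_congr rfl fun u _ => ?_
    have hterm : ∀ y, PU u * PY y * (ε * JY u y / PY y + (ε * JY u y / PY y)^2 / 2)
        = (PU u * ε) * JY u y + ε ^ 2 / 2 * (PU u * (JY u y ^ 2 / PY y)) := by
      intro y
      have hPYne : PY y ≠ 0 := (hPYpos y).ne'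
      field_simp
    simp only [hterm, Finset.sum_add_distrib, ← Finset.mul_sum, hJYy u, mul_zero, zero_add]
  rw [hmut, hquad, ← Finset.sum_sub_distrib]
  simp only [← Finset.sum_sub_distrib, ← mul_sub]
  have hbound : ∀ u y, |PU u * PY y *
      ((1 + ε * JY u y / PY y) * Real.log (1 + ε * JY u y / PY y)
        - (ε * JY u y / PY y + (ε * JY u y / PY y)^2 / 2))|
      ≤ PU u * PY y * (4 * (|JY u y| / PY y)^3) * |ε|^3 := by
    intro u y
    set s : ℝ := ε * JY u y / PY y with hsdef
    have hPYne : PY y ≠ 0 := (hPYpos y).ne'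
    have hsabs : |s| = |ε * JY u y| / PY y := by
      rw [hsdef, abs_div, abs_of_pos (hPYpos y)]
    have hs12 : |s| ≤ 1/2 := by
      rw [hsabs, div_le_iff₀ (hPYpos y)]
      have := hε u y
      linarith
    have hg := abs_one_add_mul_log_sub_le s hs12
    rw [abs_mul, abs_mul, abs_of_nonneg (hPU0 u), abs_of_pos (hPYpos y)]
    have hs3 : |s|^3 = (|JY u y| / PY y)^3 * |ε|^3 := by
      rw [hsabs, abs_mul]
      field_simp
    calc PU u * PY y * |(1 + s) * Real.log (1 + s) - (s + s^2/2)|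
        ≤ PU u * PY y * (4 * |s|^3) := by
          exact mul_le_mul_of_nonneg_left hg (mul_nonneg (hPU0 u) (hPYpos y).le)
      _ = PU u * PY y * (4 * (|JY u y| / PY y)^3) * |ε|^3 := by rw [hs3]; ring
  calc ‖∑ u, ∑ y, PU u * PY y *
      ((1 + ε * JY u y / PY y) * Real.log (1 + ε * JY u y / PY y)
        - (ε * JY u y / PY y + (ε * JY u y / PY y)^2 / 2))‖
      ≤ ∑ u, ∑ y, |PU u * PY y *
      ((1 + ε * JY u y / PY y) * Real.log (1 + ε * JY u y / PY y)
        - (ε * JY u y / PY y + (ε * JY u y / PY y)^2 / 2))| := by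
        refine le_trans (Finset.abs_sum_le_sum_abs _ _) ?_
        exact Finset.sum_le_sum fun u _ => Finset.abs_sum_le_sum_abs _ _
    _ ≤ ∑ u, ∑ y, PU u * PY y * (4 * (|JY u y| / PY y)^3) * |ε|^3 :=
        Finset.sum_le_sum fun u _ => Finset.sum_le_sum fun y _ => hbound u y
    _ = (∑ u, ∑ y, PU u * PY y * (4 * (|JY u y| / PY y)^3)) * ‖|ε|^3‖ := by
        rw [Finset.sum_mul]
        refine Finset.sum_congr rfl fun u _ => ?_
        rw [Finset.sum_mul]
        refine Finset.sum_congr rfl fun y _ => ?_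
        rw [Real.norm_eq_abs, abs_of_nonneg (by positivity : (0:ℝ) ≤ |ε|^3)]
end

section
/- (Lower bound of KL divergence by chi-squared divergence.) Let 𝒳 be a nonempty finite type and Q, P PMFs on 𝒳 with P x > 0 for every x, and let p_min = min over x of P x (so p_min > 0). Then D(Q‖P) ≥ (p_min / 2) · χ²(Q,P), i.e., ∑ x, Q x * Real.log (Q x / P x) ≥ (p_min / 2) * ∑ x, (Q x − P x)² / P x, where a summand of the left-hand side is taken to be 0 when Q x = 0. -/
open Finset

private lemma loglb {a b : ℝ} (ha : 0 < a) (hab : a ≤ b) (hb1 : b ≤ 1) :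
    b - a ≤ Real.log b - Real.log a := by
  have hb : 0 < b := lt_of_lt_of_le ha hab
  rw [← Real.log_div hb.ne' ha.ne']
  have hba : 0 < b / a := div_pos hb ha
  have h1 : Real.log (b/a)⁻¹ ≤ (b/a)⁻¹ - 1 :=
    Real.log_le_sub_one_of_pos (inv_pos.2 hba)
  rw [Real.log_inv, inv_div] at h1
  have h2 : b - a ≤ 1 - a/b := by
    rw [← sub_nonneg]
    have h3 : 1 - a/b - (b - a) = (b - a)*(1 - b)/b := by field_simp
    rw [h3]
    exact div_nonneg (mul_nonneg (sub_nonneg.2 hab) (sub_nonneg.2 hb1)) hb.le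
  linarith

private noncomputable def F (p q : ℝ) : ℝ :=
  q * (Real.log q - Real.log p) - (q - p) - (q - p)^2/2

private lemma hasDerivF (p : ℝ) {q : ℝ} (hq : 0 < q) :
    HasDerivAt (F p) (Real.log q - Real.log p - (q - p)) q := by
  have h1 : HasDerivAt (fun x : ℝ => x * (Real.log x - Real.log p))
      (1*(Real.log q - Real.log p) + q * q⁻¹) q :=
    (hasDerivAt_id q).mul ((Real.hasDerivAt_log hq.ne').sub_const _)
  have h2 : HasDerivAt (fun x : ℝ => x - p) 1 q := (hasDerivAt_id q).sub_const p
  have h3 : HasDerivAt (fun x : ℝ => (x - p)^2/2) ((2 * (q - p)^1 * 1)/2) q :=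
    (h2.pow 2).div_const 2
  have := (h1.sub h2).sub h3
  refine this.congr_deriv ?_
  rw [mul_inv_cancel₀ hq.ne']; ring

private lemma Fnonneg {p q : ℝ} (hp : 0 < p) (hp1 : p ≤ 1) (hq : 0 < q) (hq1 : q ≤ 1) :
    0 ≤ F p q := by
  have hFp : F p p = 0 := by simp [F]
  rcases le_total p q with h | h
  · have hmono : MonotoneOn (F p) (Set.Icc p 1) := by
      apply monotoneOn_of_deriv_nonneg (convex_Icc p 1)
      · intro x hx
        exact (hasDerivF p (lt_of_lt_of_le hp hx.1)).continuousAt.continuousWithinAt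
      · intro x hx
        rw [interior_Icc] at hx
        exact ((hasDerivF p (lt_trans hp hx.1)).differentiableAt).differentiableWithinAt
      · intro x hx
        rw [interior_Icc] at hx
        rw [(hasDerivF p (lt_trans hp hx.1)).deriv]
        have := loglb hp hx.1.le hx.2.le
        linarith
    have := hmono (Set.mem_Icc.2 ⟨le_refl p, hp1⟩) (Set.mem_Icc.2 ⟨h, hq1⟩) h
    linarith
  · have hanti : AntitoneOn (F p) (Set.Icc q p) := by
      apply antitoneOn_of_deriv_nonpos (convex_Icc q p)
      · intro x hx
        exact (hasDerivF p (lt_of_lt_of_le hq hx.1)).continuousAt.continuousWithinAt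
      · intro x hx
        rw [interior_Icc] at hx
        exact ((hasDerivF p (lt_of_lt_of_le hq hx.1.le)).differentiableAt).differentiableWithinAt
      · intro x hx
        rw [interior_Icc] at hx
        rw [(hasDerivF p (lt_of_lt_of_le hq hx.1.le)).deriv]
        have := loglb (lt_of_lt_of_le hq hx.1.le) hx.2.le hp1
        linarith
    have := hanti (Set.mem_Icc.2 ⟨le_refl q, h⟩) (Set.mem_Icc.2 ⟨h, le_refl p⟩) h
    linarith

private lemma key {p q : ℝ} (hp : 0 < p) (hp1 : p ≤ 1) (hq : 0 < q) (hq1 : q ≤ 1) :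
    (q - p) + (q - p)^2/2 ≤ q * Real.log (q / p) := by
  have := Fnonneg hp hp1 hq hq1
  rw [Real.log_div hq.ne' hp.ne']
  unfold F at this
  linarith

/-- Lower bound of KL divergence by chi-squared divergence.  For PMFs
`Q, P` on a nonempty finite type with `P` strictly positive and
`p_min = min_x P x > 0`, `D(Q‖P) ≥ (p_min/2) · χ²(Q,P)`, with the convention that a
KL summand is `0` when `Q x = 0`. -/
theorem chiSq_le_kl {𝒳 : Type*} [Fintype 𝒳] [Nonempty 𝒳]
    (Q P : 𝒳 → ℝ)
    (hQ0 : ∀ x, 0 ≤ Q x) (hQ1 : ∑ x, Q x = 1)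
    (hP0 : ∀ x, 0 < P x) (hP1 : ∑ x, P x = 1) :
    (Finset.univ.inf' Finset.univ_nonempty P) / 2 * ∑ x, (Q x - P x) ^ 2 / P x
      ≤ ∑ x, if Q x = 0 then 0 else Q x * Real.log (Q x / P x) := by
  set m := Finset.univ.inf' Finset.univ_nonempty P with hm
  have hP1x : ∀ x, P x ≤ 1 := fun x => by
    calc P x ≤ ∑ y, P y := Finset.single_le_sum (fun i _ => (hP0 i).le) (Finset.mem_univ x)
    _ = 1 := hP1
  have hQ1x : ∀ x, Q x ≤ 1 := fun x => by
    calc Q x ≤ ∑ y, Q y := Finset.single_le_sum (fun i _ => hQ0 i) (Finset.mem_univ x)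
    _ = 1 := hQ1
  have hmle : ∀ x, m ≤ P x := fun x => Finset.inf'_le P (Finset.mem_univ x)
  have step1 : m / 2 * ∑ x, (Q x - P x) ^ 2 / P x ≤ ∑ x, (Q x - P x)^2 / 2 := by
    rw [Finset.mul_sum]
    apply Finset.sum_le_sum
    intro x _
    have h1 : m * ((Q x - P x)^2 / P x) ≤ P x * ((Q x - P x)^2 / P x) :=
      mul_le_mul_of_nonneg_right (hmle x) (div_nonneg (sq_nonneg _) (hP0 x).le)
    have h2 : P x * ((Q x - P x)^2 / P x) = (Q x - P x)^2 := by
      rw [mul_comm, div_mul_cancel₀ _ (hP0 x).ne']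
    calc m / 2 * ((Q x - P x)^2 / P x) = m * ((Q x - P x)^2 / P x) / 2 := by ring
    _ ≤ P x * ((Q x - P x)^2 / P x) / 2 := by linarith
    _ = (Q x - P x)^2 / 2 := by rw [h2]
  have step2 : ∑ x, ((Q x - P x) + (Q x - P x)^2 / 2)
      ≤ ∑ x, if Q x = 0 then 0 else Q x * Real.log (Q x / P x) := by
    apply Finset.sum_le_sum
    intro x _
    by_cases h : Q x = 0
    · simp only [h, if_true]
      have := hP0 x; have := hP1x x
      nlinarith
    · simp only [h, if_false]
      exact key (hP0 x) (hP1x x) (lt_of_le_of_ne (hQ0 x) (Ne.symm h)) (hQ1x x)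
  have step3 : ∑ x, ((Q x - P x) + (Q x - P x)^2 / 2) = ∑ x, (Q x - P x)^2 / 2 := by
    rw [Finset.sum_add_distrib, Finset.sum_sub_distrib, hQ1, hP1]
    ring
  linarith
end
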